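/- Let L be a DGLA, α a Maurer–Cartan element of L[[ℏ]] with the ℏ-adic filtration, ξ ∈ ℏ·(L⁰[t])[[ℏ]], and α(t) the solution of dα/dt = dξ + [α(t), ξ], α(0) = α. Then for every η ∈ ℏ·L⁰[[ℏ]] and integer k ≥ 0, the element λ(t) = exp((t^{k+1}/(k+1))[·,η]) α(t) + ((exp((t^{k+1}/(k+1))[·,η]) − 1)/[·,η]) dη satisfies dλ(t)/dt = d ξ̃ + [λ(t), ξ̃] with ξ̃(t) = t^k η + exp((t^{k+1}/(k+1))[·,η]) ξ(t). -/

import Mathlib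

set_option linter.unusedSectionVars false
set_option maxHeartbeats 1000000

/-- `x k n` is the coefficient of `ℏ^k t^n`. -/
def IsPolyInT {V : Type*} [Zero V] (v : ℕ → ℕ → V) : Prop :=
  ∀ k, ∃ N, ∀ n, N ≤ n → v k n = 0

/-- Multiplication by `c(t) = t^{q+1}/(q+1)` on `(β[t])[[ℏ]]`. -/
def cShift {β : Type*} [AddCommMonoid β] [Module ℚ β] (q : ℕ)
    (ρ : ℕ → ℕ → β) : ℕ → ℕ → β :=
  fun k n => if q + 1 ≤ n then ((q + 1 : ℚ))⁻¹ • ρ k (n - (q + 1)) else 0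

section

variable {g0 g1 g2 : Type*}
  [AddCommGroup g0] [Module ℚ g0] [AddCommGroup g1] [Module ℚ g1]
  [AddCommGroup g2] [Module ℚ g2]

/-- The operator `[·, η]` on `(L¹[t])[[ℏ]]`, for `η ∈ ℏ·L⁰[[ℏ]]`. -/
def adEta1 (br10 : g1 →ₗ[ℚ] g0 →ₗ[ℚ] g1) (η : ℕ → g0)
    (ρ : ℕ → ℕ → g1) : ℕ → ℕ → g1 :=
  fun k n => ∑ p ∈ Finset.HasAntidiagonal.antidiagonal k, br10 (ρ p.1 n) (η p.2)

/-- The operator `[·, η]` on `(L⁰[t])[[ℏ]]`. -/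
def adEta0 (br00 : g0 →ₗ[ℚ] g0 →ₗ[ℚ] g0) (η : ℕ → g0)
    (ρ : ℕ → ℕ → g0) : ℕ → ℕ → g0 :=
  fun k n => ∑ p ∈ Finset.HasAntidiagonal.antidiagonal k, br00 (ρ p.1 n) (η p.2)

/-- `λ(t) = exp((t^{q+1}/(q+1))[·,η]) α(t)
           + ((exp((t^{q+1}/(q+1))[·,η]) − 1)/[·,η]) dη`. -/
def lamEl (br10 : g1 →ₗ[ℚ] g0 →ₗ[ℚ] g1) (d0 : g0 →ₗ[ℚ] g1) (q : ℕ)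
    (η : ℕ → g0) (α : ℕ → ℕ → g1) : ℕ → ℕ → g1 :=
  fun k n =>
    (∑ m ∈ Finset.range (k + 1),
      (m.factorial : ℚ)⁻¹ •
        (((fun ρ => cShift q (adEta1 br10 η ρ))^[m]) α) k n)
    + ∑ m ∈ Finset.range (k + 1),
        ((m + 1).factorial : ℚ)⁻¹ •
          (cShift q
            (((fun ρ => cShift q (adEta1 br10 η ρ))^[m])
              (fun i j => if j = 0 then d0 (η i) else 0))) k n

/-- `ξ̃(t) = t^q η + exp((t^{q+1}/(q+1))[·,η]) ξ(t)`. -/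
def xiTilde (br00 : g0 →ₗ[ℚ] g0 →ₗ[ℚ] g0) (q : ℕ)
    (η : ℕ → g0) (ξ : ℕ → ℕ → g0) : ℕ → ℕ → g0 :=
  fun k n =>
    (if n = q then η k else 0)
    + ∑ m ∈ Finset.range (k + 1),
        (m.factorial : ℚ)⁻¹ •
          (((fun ρ => cShift q (adEta0 br00 η ρ))^[m]) ξ) k n

/-! ### Auxiliary operators -/

/-- `d/dt` on coefficients. -/
def DtOp {V : Type*} [AddCommMonoid V] (ρ : ℕ → ℕ → V) : ℕ → ℕ → V :=
  fun k n => (n + 1 : ℕ) • ρ k (n + 1)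

/-- Multiplication by `t^q`. -/
def PmulOp {V : Type*} [AddCommMonoid V] (q : ℕ) (ρ : ℕ → ℕ → V) : ℕ → ℕ → V :=
  fun k n => if q ≤ n then ρ k (n - q) else 0

/-- The convolution bracket. -/
def BrOp (br10 : g1 →ₗ[ℚ] g0 →ₗ[ℚ] g1) (ρ : ℕ → ℕ → g1) (σ : ℕ → ℕ → g0) :
    ℕ → ℕ → g1 :=
  fun k n => ∑ p ∈ Finset.HasAntidiagonal.antidiagonal k, ∑ r ∈ Finset.HasAntidiagonal.antidiagonal n,
    br10 (ρ p.1 r.1) (σ p.2 r.2)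

/-- Applying `d0` coefficientwise. -/
def DdOp (d0 : g0 →ₗ[ℚ] g1) (σ : ℕ → ℕ → g0) : ℕ → ℕ → g1 :=
  fun k n => d0 (σ k n)

/-- The operator `T = c(t)·[·,η]`. -/
def TOp {V : Type*} [AddCommGroup V] [Module ℚ V]
    (br : V →ₗ[ℚ] g0 →ₗ[ℚ] V) (η : ℕ → g0) (q : ℕ)
    (ρ : ℕ → ℕ → V) : ℕ → ℕ → V :=
  cShift q (adEta1 br η ρ)

section Generic

variable {V : Type*} [AddCommGroup V] [Module ℚ V]
variable (br : V →ₗ[ℚ] g0 →ₗ[ℚ] V) (η : ℕ → g0) (q : ℕ)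

theorem TOp_eq : (fun ρ => cShift q (adEta1 br η ρ)) = TOp br η q := rfl

theorem TOp_apply (ρ : ℕ → ℕ → V) : TOp br η q ρ = cShift q (adEta1 br η ρ) := rfl

/-! #### Linearity -/

theorem cShift_add (ρ σ : ℕ → ℕ → V) :
    cShift q (ρ + σ) = cShift q ρ + cShift q σ := by
  funext k n
  simp only [cShift, Pi.add_apply]
  split_ifs <;> simp [smul_add]

theorem cShift_smul (c : ℚ) (ρ : ℕ → ℕ → V) :
    cShift q (c • ρ) = c • cShift q ρ := by
  funext k n
  simp only [cShift, Pi.smul_apply]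
  split_ifs with h
  · exact smul_comm _ _ _
  · simp

theorem adEta1_add (ρ σ : ℕ → ℕ → V) :
    adEta1 br η (ρ + σ) = adEta1 br η ρ + adEta1 br η σ := by
  funext k n
  simp [adEta1, Finset.sum_add_distrib]

theorem adEta1_smul (c : ℚ) (ρ : ℕ → ℕ → V) :
    adEta1 br η (c • ρ) = c • adEta1 br η ρ := by
  funext k n
  simp [adEta1, Finset.smul_sum]

theorem TOp_add (ρ σ : ℕ → ℕ → V) :
    TOp br η q (ρ + σ) = TOp br η q ρ + TOp br η q σ := by
  rw [TOp_apply, TOp_apply, TOp_apply, adEta1_add, cShift_add]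

theorem TOp_smul (c : ℚ) (ρ : ℕ → ℕ → V) :
    TOp br η q (c • ρ) = c • TOp br η q ρ := by
  rw [TOp_apply, TOp_apply, adEta1_smul, cShift_smul]

theorem Titer_add (m : ℕ) (ρ σ : ℕ → ℕ → V) :
    (TOp br η q)^[m] (ρ + σ) = (TOp br η q)^[m] ρ + (TOp br η q)^[m] σ := by
  induction m generalizing ρ σ with
  | zero => rfl
  | succ m ih =>
    rw [Function.iterate_succ_apply, Function.iterate_succ_apply,
      Function.iterate_succ_apply, TOp_add, ih]

theorem Titer_smul (m : ℕ) (c : ℚ) (ρ : ℕ → ℕ → V) :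
    (TOp br η q)^[m] (c • ρ) = c • (TOp br η q)^[m] ρ := by
  induction m generalizing ρ with
  | zero => rfl
  | succ m ih =>
    rw [Function.iterate_succ_apply, Function.iterate_succ_apply, TOp_smul, ih]

/-! #### Vanishing in low `ℏ`-degree -/

theorem adEta1_low {s : ℕ} {ρ : ℕ → ℕ → V} (hη : η 0 = 0)
    (h : ∀ i n, i < s → ρ i n = 0) :
    ∀ i n, i < s + 1 → adEta1 br η ρ i n = 0 := by
  intro i n hi
  apply Finset.sum_eq_zero
  rintro ⟨a, b⟩ hp
  rw [Finset.HasAntidiagonal.mem_antidiagonal] at hp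
  rcases Nat.eq_zero_or_pos b with hb | hb
  · subst hb; simp [hη]
  · have : a < s := by omega
    simp [h a n this]

theorem cShift_low {s : ℕ} {ρ : ℕ → ℕ → V}
    (h : ∀ i n, i < s → ρ i n = 0) :
    ∀ i n, i < s → cShift q ρ i n = 0 := by
  intro i n hi
  simp only [cShift]
  split_ifs <;> simp [h i _ hi]

theorem Titer_low (hη : η 0 = 0) {s : ℕ} {ρ : ℕ → ℕ → V}
    (h : ∀ i n, i < s → ρ i n = 0) (m : ℕ) :
    ∀ i n, i < s + m → (TOp br η q)^[m] ρ i n = 0 := by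
  induction m with
  | zero => simpa using h
  | succ m ih =>
    intro i n hi
    rw [Function.iterate_succ_apply', TOp_apply]
    exact cShift_low q (adEta1_low br η hη (s := s + m) ih) i n (by omega)

theorem Titer_low' (hη : η 0 = 0) {m : ℕ} (ρ : ℕ → ℕ → V) :
    ∀ i n, i < m → (TOp br η q)^[m] ρ i n = 0 := by
  have := Titer_low br η q hη (s := 0) (ρ := ρ) (fun i n h => absurd h (Nat.not_lt_zero i)) m
  simpa using this

/-! #### Commutation identities -/

theorem Dt_adEta1 (ρ : ℕ → ℕ → V) :
    DtOp (adEta1 br η ρ) = adEta1 br η (DtOp ρ) := by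
  funext k n
  simp [DtOp, adEta1, Finset.smul_sum, map_nsmul]

theorem Dt_cShift (ρ : ℕ → ℕ → V) :
    DtOp (cShift q ρ) = PmulOp q ρ + cShift q (DtOp ρ) := by
  funext k n
  simp only [DtOp, cShift, PmulOp, Pi.add_apply]
  rcases Nat.lt_or_ge n q with h | h
  · rw [if_neg (by omega), if_neg (by omega), if_neg (by omega)]
    simp
  · rcases Nat.eq_or_lt_of_le h with h2 | h2
    · rw [if_pos (by omega), if_pos (by omega), if_neg (by omega), add_zero]
      have e1 : n + 1 - (q + 1) = 0 := by omega
      have e2 : n - q = 0 := by omega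
      rw [e1, e2, ← Nat.cast_smul_eq_nsmul ℚ (n + 1), smul_smul]
      have e3 : ((n + 1 : ℕ) : ℚ) * ((q : ℚ) + 1)⁻¹ = 1 := by
        have hq : (q : ℚ) = (n : ℚ) := by exact_mod_cast congrArg (Nat.cast : ℕ → ℚ) h2
        rw [hq]
        push_cast
        field_simp
      rw [e3, one_smul]
    · rw [if_pos (by omega), if_pos (by omega), if_pos (by omega)]
      have e1 : n + 1 - (q + 1) = n - q := by omega
      rw [e1, ← Nat.cast_smul_eq_nsmul ℚ (n + 1),
        ← Nat.cast_smul_eq_nsmul ℚ (n - (q + 1) + 1), smul_smul, smul_smul]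
      have e2 : n - (q + 1) + 1 = n - q := by omega
      rw [e2]
      have e3 : ((n + 1 : ℕ) : ℚ) * ((q : ℚ) + 1)⁻¹
          = 1 + ((q : ℚ) + 1)⁻¹ * ((n - q : ℕ) : ℚ) := by
        have hq : ((q : ℚ) + 1) ≠ 0 := by positivity
        rw [Nat.cast_sub (by omega : q ≤ n)]
        push_cast
        field_simp
        ring
      rw [e3, add_smul, one_smul]

theorem cShift_adEta1 (ρ : ℕ → ℕ → V) :
    cShift q (adEta1 br η ρ) = adEta1 br η (cShift q ρ) := by
  funext k n
  simp only [cShift, adEta1]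
  split_ifs with h
  · rw [Finset.smul_sum]
    simp
  · simp

theorem Pq_adEta1 (ρ : ℕ → ℕ → V) :
    adEta1 br η (PmulOp q ρ) = PmulOp q (adEta1 br η ρ) := by
  funext k n
  simp only [adEta1, PmulOp]
  split_ifs with h
  · rfl
  · simp

theorem Pq_cShift (ρ : ℕ → ℕ → V) :
    cShift q (PmulOp q ρ) = PmulOp q (cShift q ρ) := by
  funext k n
  simp only [cShift, PmulOp]
  by_cases h : 2 * q + 1 ≤ n
  · rw [if_pos (by omega), if_pos (by omega), if_pos (by omega), if_pos (by omega),
      show n - (q + 1) - q = n - q - (q + 1) from by omega]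
  · rcases Nat.lt_or_ge n (q + 1) with h1 | h1
    · rw [if_neg (by omega)]
      rcases Nat.lt_or_ge n q with h2 | h2
      · rw [if_neg (by omega)]
      · rw [if_pos (by omega), if_neg (by omega)]
    · rw [if_pos (by omega), if_neg (by omega), if_pos (by omega), if_neg (by omega),
        smul_zero]

theorem T_Pq_adEta1 (ρ : ℕ → ℕ → V) :
    TOp br η q (PmulOp q (adEta1 br η ρ))
      = PmulOp q (adEta1 br η (TOp br η q ρ)) := by
  rw [TOp_apply, TOp_apply, Pq_adEta1, Pq_cShift, cShift_adEta1]

theorem Titer_Pq_adEta1 (m : ℕ) (ρ : ℕ → ℕ → V) :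
    (TOp br η q)^[m] (PmulOp q (adEta1 br η ρ))
      = PmulOp q (adEta1 br η ((TOp br η q)^[m] ρ)) := by
  induction m generalizing ρ with
  | zero => rfl
  | succ m ih =>
    rw [Function.iterate_succ_apply, Function.iterate_succ_apply, T_Pq_adEta1, ih]

/-- `d/dt` of the iterate `T^[m+1] ρ`. -/
theorem Dt_Titer (m : ℕ) (ρ : ℕ → ℕ → V) :
    DtOp ((TOp br η q)^[m + 1] ρ)
      = (TOp br η q)^[m + 1] (DtOp ρ)
        + ((m : ℚ) + 1) • PmulOp q (adEta1 br η ((TOp br η q)^[m] ρ)) := by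
  induction m generalizing ρ with
  | zero =>
    rw [Function.iterate_succ_apply', Function.iterate_succ_apply',
      Function.iterate_zero_apply, Function.iterate_zero_apply,
      TOp_apply, TOp_apply, Dt_cShift, Dt_adEta1]
    norm_num
    abel
  | succ m ih =>
    rw [show m + 1 + 1 = (m + 1) + 1 from rfl]
    rw [Function.iterate_succ_apply' (TOp br η q) (m + 1), TOp_apply,
      Dt_cShift, Dt_adEta1, ih, adEta1_add, cShift_add, adEta1_smul, cShift_smul,
      ← TOp_apply, ← TOp_apply, T_Pq_adEta1,
      ← Function.iterate_succ_apply' (TOp br η q) (m + 1) (DtOp ρ),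
      ← Function.iterate_succ_apply' (TOp br η q) m ρ]
    push_cast
    module

end Generic

/-! ### Sum combinatorics -/

theorem sum_antidiagonal_assoc {V : Type*} [AddCommMonoid V] (k : ℕ)
    (F : ℕ → ℕ → ℕ → V) :
    ∑ p ∈ Finset.HasAntidiagonal.antidiagonal k, ∑ s ∈ Finset.HasAntidiagonal.antidiagonal p.1, F s.1 s.2 p.2
      = ∑ p ∈ Finset.HasAntidiagonal.antidiagonal k, ∑ s ∈ Finset.HasAntidiagonal.antidiagonal p.2, F p.1 s.1 s.2 := by
  rw [Finset.sum_sigma', Finset.sum_sigma']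
  refine Finset.sum_nbij'
    (fun x => ⟨(x.2.1, x.2.2 + x.1.2), (x.2.2, x.1.2)⟩)
    (fun x => ⟨(x.1.1 + x.2.1, x.2.2), (x.1.1, x.2.1)⟩)
    ?_ ?_ ?_ ?_ ?_
  · rintro ⟨⟨a, b⟩, ⟨c, d⟩⟩ hx
    simp only [Finset.mem_sigma, Finset.HasAntidiagonal.mem_antidiagonal] at hx ⊢
    exact ⟨by omega, trivial⟩
  · rintro ⟨⟨a, b⟩, ⟨c, d⟩⟩ hx
    simp only [Finset.mem_sigma, Finset.HasAntidiagonal.mem_antidiagonal] at hx ⊢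
    exact ⟨by omega, trivial⟩
  · rintro ⟨⟨a, b⟩, ⟨c, d⟩⟩ hx
    simp only [Finset.mem_sigma, Finset.HasAntidiagonal.mem_antidiagonal] at hx
    exact Sigma.ext (Prod.ext hx.2 rfl) HEq.rfl
  · rintro ⟨⟨a, b⟩, ⟨c, d⟩⟩ hx
    simp only [Finset.mem_sigma, Finset.HasAntidiagonal.mem_antidiagonal] at hx
    exact Sigma.ext (Prod.ext rfl hx.2) HEq.rfl
  · rintro ⟨⟨a, b⟩, ⟨c, d⟩⟩ hx
    rfl

theorem sum_antidiagonal_shift {V : Type*} [AddCommMonoid V] (c n : ℕ)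
    (f : ℕ → ℕ → V) :
    ∑ r ∈ Finset.HasAntidiagonal.antidiagonal n, (if c ≤ r.1 then f (r.1 - c) r.2 else 0)
      = if c ≤ n then ∑ s ∈ Finset.HasAntidiagonal.antidiagonal (n - c), f s.1 s.2 else 0 := by
  split_ifs with h
  · rw [← Finset.sum_filter]
    refine Finset.sum_nbij' (fun r => (r.1 - c, r.2)) (fun s => (s.1 + c, s.2))
      ?_ ?_ ?_ ?_ ?_
    · rintro ⟨a, b⟩ hx
      simp only [Finset.mem_filter, Finset.HasAntidiagonal.mem_antidiagonal] at hx ⊢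
      omega
    · rintro ⟨a, b⟩ hx
      simp only [Finset.mem_filter, Finset.HasAntidiagonal.mem_antidiagonal] at hx ⊢
      omega
    · rintro ⟨a, b⟩ hx
      simp only [Finset.mem_filter, Finset.HasAntidiagonal.mem_antidiagonal] at hx
      exact Prod.ext (Nat.sub_add_cancel hx.2) rfl
    · rintro ⟨a, b⟩ hx
      exact Prod.ext (by show a + c - c = a; omega) rfl
    · rintro ⟨a, b⟩ hx
      rfl
  · apply Finset.sum_eq_zero
    rintro ⟨a, b⟩ hr
    rw [Finset.HasAntidiagonal.mem_antidiagonal] at hr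
    rw [if_neg (by omega)]

theorem sum_antidiagonal_pick_right {V : Type*} [AddCommMonoid V] (n c : ℕ)
    (f : ℕ → V) :
    ∑ r ∈ Finset.HasAntidiagonal.antidiagonal n, (if r.2 = c then f r.1 else 0)
      = if c ≤ n then f (n - c) else 0 := by
  split_ifs with h
  · rw [Finset.sum_eq_single (n - c, c)]
    · simp
    · rintro ⟨a, b⟩ hb hne
      rw [Finset.HasAntidiagonal.mem_antidiagonal] at hb
      by_cases hbc : b = c
      · exact absurd (by simp only [Prod.mk.injEq]; omega) hne
      · rw [if_neg hbc]
    · intro hmem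
      exact absurd (Finset.HasAntidiagonal.mem_antidiagonal.2 (by omega)) hmem
  · apply Finset.sum_eq_zero
    rintro ⟨a, b⟩ hr
    rw [Finset.HasAntidiagonal.mem_antidiagonal] at hr
    rw [if_neg (by omega)]

theorem sum_antidiagonal_pick_left {V : Type*} [AddCommMonoid V] (n : ℕ)
    (f : ℕ → V) :
    ∑ r ∈ Finset.HasAntidiagonal.antidiagonal n, (if r.1 = 0 then f r.2 else 0) = f n := by
  rw [Finset.sum_eq_single (0, n)]
  · simp
  · rintro ⟨a, b⟩ hb hne
    by_cases ha : a = 0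
    · rw [Finset.HasAntidiagonal.mem_antidiagonal] at hb
      exact absurd (by simp only [Prod.mk.injEq]; omega) hne
    · rw [if_neg ha]
  · intro hmem
    exact absurd (Finset.HasAntidiagonal.mem_antidiagonal.2 (by omega)) hmem

theorem triangle_square {V : Type*} [AddCommMonoid V] (N : ℕ) (F : ℕ → ℕ → V) :
    ∑ i ∈ Finset.range N, ∑ j ∈ Finset.range N, (if i + j < N then F i j else 0)
      = ∑ m ∈ Finset.range N, ∑ i ∈ Finset.range (m + 1), F i (m - i) := by
  have step : ∀ m ∈ Finset.range N, ∑ i ∈ Finset.range (m + 1), F i (m - i)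
      = ∑ p ∈ Finset.HasAntidiagonal.antidiagonal m, F p.1 p.2 := by
    intro m _
    rw [Finset.Nat.sum_antidiagonal_eq_sum_range_succ_mk]
  rw [Finset.sum_congr rfl step, ← Finset.sum_product', ← Finset.sum_filter,
    Finset.sum_sigma']
  refine Finset.sum_nbij' (fun x => ⟨x.1 + x.2, (x.1, x.2)⟩) (fun x => (x.2.1, x.2.2))
    ?_ ?_ ?_ ?_ ?_
  · rintro ⟨a, b⟩ hx
    simp only [Finset.mem_filter, Finset.mem_product, Finset.mem_range] at hx
    simp only [Finset.mem_sigma, Finset.HasAntidiagonal.mem_antidiagonal, Finset.mem_range]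
    exact ⟨by omega, trivial⟩
  · rintro ⟨m, a, b⟩ hx
    simp only [Finset.mem_sigma, Finset.HasAntidiagonal.mem_antidiagonal, Finset.mem_range] at hx
    simp only [Finset.mem_filter, Finset.mem_product, Finset.mem_range]
    omega
  · rintro ⟨a, b⟩ hx
    rfl
  · rintro ⟨m, a, b⟩ hx
    simp only [Finset.mem_sigma, Finset.HasAntidiagonal.mem_antidiagonal, Finset.mem_range] at hx
    exact Sigma.ext hx.2 HEq.rfl
  · rintro ⟨a, b⟩ hx
    rfl

/-! ### Bracket convolution lemmas -/

section BrSec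

variable (br10 : g1 →ₗ[ℚ] g0 →ₗ[ℚ] g1) (br00 : g0 →ₗ[ℚ] g0 →ₗ[ℚ] g0)
variable (d0 : g0 →ₗ[ℚ] g1) (η : ℕ → g0) (q : ℕ)

theorem BrOp_add_left (ρ ρ' : ℕ → ℕ → g1) (σ : ℕ → ℕ → g0) :
    BrOp br10 (ρ + ρ') σ = BrOp br10 ρ σ + BrOp br10 ρ' σ := by
  funext k n
  simp [BrOp, Finset.sum_add_distrib]

theorem BrOp_add_right (ρ : ℕ → ℕ → g1) (σ σ' : ℕ → ℕ → g0) :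
    BrOp br10 ρ (σ + σ') = BrOp br10 ρ σ + BrOp br10 ρ σ' := by
  funext k n
  simp [BrOp, Finset.sum_add_distrib]

theorem BrOp_smul_left (c : ℚ) (ρ : ℕ → ℕ → g1) (σ : ℕ → ℕ → g0) :
    BrOp br10 (c • ρ) σ = c • BrOp br10 ρ σ := by
  funext k n
  simp [BrOp, Finset.smul_sum]

theorem BrOp_smul_right (c : ℚ) (ρ : ℕ → ℕ → g1) (σ : ℕ → ℕ → g0) :
    BrOp br10 ρ (c • σ) = c • BrOp br10 ρ σ := by
  funext k n
  simp [BrOp, Finset.smul_sum]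

theorem BrOp_zero_left (σ : ℕ → ℕ → g0) : BrOp br10 0 σ = 0 := by
  funext k n
  simp [BrOp]

theorem BrOp_zero_right (ρ : ℕ → ℕ → g1) : BrOp br10 ρ 0 = 0 := by
  funext k n
  simp [BrOp]

theorem BrOp_sum_left {s : Finset ℕ} (f : ℕ → ℕ → ℕ → g1) (σ : ℕ → ℕ → g0) :
    BrOp br10 (∑ i ∈ s, f i) σ = ∑ i ∈ s, BrOp br10 (f i) σ := by
  classical
  induction s using Finset.cons_induction with
  | empty => simp [BrOp_zero_left]
  | cons a s ha ih => rw [Finset.sum_cons, Finset.sum_cons, BrOp_add_left, ih]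

theorem BrOp_sum_right {s : Finset ℕ} (ρ : ℕ → ℕ → g1) (g : ℕ → ℕ → ℕ → g0) :
    BrOp br10 ρ (∑ i ∈ s, g i) = ∑ i ∈ s, BrOp br10 ρ (g i) := by
  classical
  induction s using Finset.cons_induction with
  | empty => simp [BrOp_zero_right]
  | cons a s ha ih => rw [Finset.sum_cons, Finset.sum_cons, BrOp_add_right, ih]

theorem BrOp_low {s u : ℕ} {ρ : ℕ → ℕ → g1} {σ : ℕ → ℕ → g0}
    (hρ : ∀ i n, i < s → ρ i n = 0) (hσ : ∀ i n, i < u → σ i n = 0) :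
    ∀ i n, i < s + u → BrOp br10 ρ σ i n = 0 := by
  intro i n hi
  apply Finset.sum_eq_zero
  rintro ⟨a, b⟩ hp
  rw [Finset.HasAntidiagonal.mem_antidiagonal] at hp
  apply Finset.sum_eq_zero
  rintro ⟨c, e⟩ hr
  rcases Nat.lt_or_ge a s with ha | ha
  · simp [hρ a _ ha]
  · have hb : b < u := by omega
    simp [hσ b _ hb]

theorem BrOp_congr_below {k : ℕ} {ρ ρ' : ℕ → ℕ → g1} {σ σ' : ℕ → ℕ → g0}
    (hρ : ∀ p n, p ≤ k → ρ p n = ρ' p n) (hσ : ∀ p n, p ≤ k → σ p n = σ' p n)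
    (n : ℕ) : BrOp br10 ρ σ k n = BrOp br10 ρ' σ' k n := by
  apply Finset.sum_congr rfl
  rintro ⟨a, b⟩ hp
  rw [Finset.HasAntidiagonal.mem_antidiagonal] at hp
  apply Finset.sum_congr rfl
  rintro ⟨c, e⟩ hr
  rw [hρ a c (by omega), hσ b e (by omega)]

/-- The bracket with `t^q·η`. -/
theorem BrOp_etaq (ρ : ℕ → ℕ → g1) :
    BrOp br10 ρ (fun i j => if j = q then η i else 0)
      = PmulOp q (adEta1 br10 η ρ) := by
  funext k n
  simp only [BrOp, PmulOp, adEta1]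
  have : ∀ p : ℕ × ℕ,
      ∑ r ∈ Finset.HasAntidiagonal.antidiagonal n, br10 (ρ p.1 r.1) (if r.2 = q then η p.2 else 0)
        = if q ≤ n then br10 (ρ p.1 (n - q)) (η p.2) else 0 := by
    intro p
    rw [← sum_antidiagonal_pick_right n q (fun a => br10 (ρ p.1 a) (η p.2))]
    apply Finset.sum_congr rfl
    intro r _
    split_ifs <;> simp
  rw [Finset.sum_congr rfl (fun p _ => this p)]
  split_ifs <;> simp

/-- Exchange of the middle and outer entries in a triple convolution. -/
theorem sum_antidiagonal_middle' {V : Type*} [AddCommMonoid V] (k : ℕ)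
    (H : ℕ → ℕ → ℕ → V) :
    ∑ p ∈ Finset.HasAntidiagonal.antidiagonal k, ∑ s ∈ Finset.HasAntidiagonal.antidiagonal p.1, H s.1 p.2 s.2
      = ∑ p ∈ Finset.HasAntidiagonal.antidiagonal k, ∑ s ∈ Finset.HasAntidiagonal.antidiagonal p.1, H s.1 s.2 p.2 := by
  rw [sum_antidiagonal_assoc k (fun a b c => H a c b), sum_antidiagonal_assoc k H]
  apply Finset.sum_congr rfl
  intro p _
  exact Finset.Nat.sum_antidiagonal_swap (f := fun s => H p.1 s.1 s.2)

/-- Derivation property of `[·,η]` on the convolution bracket. -/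
theorem adEta1_BrOp
    (hJac10 : ∀ (a : g1) (x y : g0),
      br10 (br10 a x) y - br10 (br10 a y) x = br10 a (br00 x y))
    (ρ : ℕ → ℕ → g1) (σ : ℕ → ℕ → g0) :
    adEta1 br10 η (BrOp br10 ρ σ)
      = BrOp br10 (adEta1 br10 η ρ) σ + BrOp br10 ρ (adEta0 br00 η σ) := by
  funext k n
  have hL : adEta1 br10 η (BrOp br10 ρ σ) k n
      = ∑ p ∈ Finset.HasAntidiagonal.antidiagonal k, ∑ s ∈ Finset.HasAntidiagonal.antidiagonal p.1,
          (∑ r ∈ Finset.HasAntidiagonal.antidiagonal n, br10 (br10 (ρ s.1 r.1) (σ s.2 r.2)) (η p.2)) := by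
    simp [adEta1, BrOp, map_sum]
  have hA : BrOp br10 (adEta1 br10 η ρ) σ k n
      = ∑ p ∈ Finset.HasAntidiagonal.antidiagonal k, ∑ s ∈ Finset.HasAntidiagonal.antidiagonal p.1,
          (∑ r ∈ Finset.HasAntidiagonal.antidiagonal n, br10 (br10 (ρ s.1 r.1) (η s.2)) (σ p.2 r.2)) := by
    simp only [BrOp, adEta1, map_sum, LinearMap.coe_sum, Finset.sum_apply]
    exact Finset.sum_congr rfl (fun p _ => Finset.sum_comm)
  have hB : BrOp br10 ρ (adEta0 br00 η σ) k n
      = ∑ p ∈ Finset.HasAntidiagonal.antidiagonal k, ∑ s ∈ Finset.HasAntidiagonal.antidiagonal p.1,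
          (∑ r ∈ Finset.HasAntidiagonal.antidiagonal n, br10 (ρ s.1 r.1) (br00 (σ s.2 r.2) (η p.2))) := by
    have e1 : BrOp br10 ρ (adEta0 br00 η σ) k n
        = ∑ p ∈ Finset.HasAntidiagonal.antidiagonal k, ∑ s ∈ Finset.HasAntidiagonal.antidiagonal p.2,
            (∑ r ∈ Finset.HasAntidiagonal.antidiagonal n, br10 (ρ p.1 r.1) (br00 (σ s.1 r.2) (η s.2))) := by
      simp only [BrOp, adEta0, map_sum]
      exact Finset.sum_congr rfl (fun p _ => Finset.sum_comm)
    rw [e1, ← sum_antidiagonal_assoc k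
      (fun a b c => ∑ r ∈ Finset.HasAntidiagonal.antidiagonal n, br10 (ρ a r.1) (br00 (σ b r.2) (η c)))]
  rw [hL]
  simp only [Pi.add_apply]
  rw [hA, hB]
  have step1 : ∑ p ∈ Finset.HasAntidiagonal.antidiagonal k, ∑ s ∈ Finset.HasAntidiagonal.antidiagonal p.1,
        (∑ r ∈ Finset.HasAntidiagonal.antidiagonal n, br10 (br10 (ρ s.1 r.1) (σ s.2 r.2)) (η p.2))
      = (∑ p ∈ Finset.HasAntidiagonal.antidiagonal k, ∑ s ∈ Finset.HasAntidiagonal.antidiagonal p.1,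
          (∑ r ∈ Finset.HasAntidiagonal.antidiagonal n, br10 (br10 (ρ s.1 r.1) (η p.2)) (σ s.2 r.2)))
        + ∑ p ∈ Finset.HasAntidiagonal.antidiagonal k, ∑ s ∈ Finset.HasAntidiagonal.antidiagonal p.1,
            (∑ r ∈ Finset.HasAntidiagonal.antidiagonal n, br10 (ρ s.1 r.1) (br00 (σ s.2 r.2) (η p.2))) := by
    rw [← Finset.sum_add_distrib]
    refine Finset.sum_congr rfl (fun p _ => ?_)
    rw [← Finset.sum_add_distrib]
    refine Finset.sum_congr rfl (fun s _ => ?_)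
    rw [← Finset.sum_add_distrib]
    refine Finset.sum_congr rfl (fun r _ => ?_)
    exact sub_eq_iff_eq_add'.mp (hJac10 (ρ s.1 r.1) (σ s.2 r.2) (η p.2))
  rw [step1]
  congr 1
  exact sum_antidiagonal_middle' k
    (fun a b c => ∑ r ∈ Finset.HasAntidiagonal.antidiagonal n, br10 (br10 (ρ a r.1) (η b)) (σ c r.2))

/-- Cocycle property: `d[σ,η] = [dσ,η] − [dη,σ]` coefficientwise. -/
theorem adEta1_DdOp
    (hcocycle : ∀ x y : g0, d0 (br00 x y) = br10 (d0 x) y - br10 (d0 y) x)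
    (σ : ℕ → ℕ → g0) :
    adEta1 br10 η (DdOp d0 σ)
      = DdOp d0 (adEta0 br00 η σ)
        + BrOp br10 (fun i j => if j = 0 then d0 (η i) else 0) σ := by
  funext k n
  have hBr : BrOp br10 (fun i j => if j = 0 then d0 (η i) else 0) σ k n
      = ∑ p ∈ Finset.HasAntidiagonal.antidiagonal k, br10 (d0 (η p.2)) (σ p.1 n) := by
    have inner : ∀ p : ℕ × ℕ,
        ∑ r ∈ Finset.HasAntidiagonal.antidiagonal n,
            br10 (if r.1 = 0 then d0 (η p.1) else 0) (σ p.2 r.2)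
          = br10 (d0 (η p.1)) (σ p.2 n) := by
      intro p
      rw [← sum_antidiagonal_pick_left n (fun j => br10 (d0 (η p.1)) (σ p.2 j))]
      refine Finset.sum_congr rfl (fun r _ => ?_)
      split_ifs <;> simp
    rw [show BrOp br10 (fun i j => if j = 0 then d0 (η i) else 0) σ k n
        = ∑ p ∈ Finset.HasAntidiagonal.antidiagonal k, ∑ r ∈ Finset.HasAntidiagonal.antidiagonal n,
            br10 (if r.1 = 0 then d0 (η p.1) else 0) (σ p.2 r.2) from rfl]
    rw [Finset.sum_congr rfl (fun p _ => inner p)]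
    rw [← Finset.Nat.sum_antidiagonal_swap (f := fun p => br10 (d0 (η p.2)) (σ p.1 n))]
    simp only [Prod.fst_swap, Prod.snd_swap]
  simp only [Pi.add_apply]
  rw [hBr]
  show ∑ p ∈ Finset.HasAntidiagonal.antidiagonal k, br10 (d0 (σ p.1 n)) (η p.2) = _
  have : ∀ p : ℕ × ℕ, br10 (d0 (σ p.1 n)) (η p.2)
      = d0 (br00 (σ p.1 n) (η p.2)) + br10 (d0 (η p.2)) (σ p.1 n) := by
    intro p
    have h := hcocycle (σ p.1 n) (η p.2)
    rw [h]
    abel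
  rw [Finset.sum_congr rfl (fun p _ => this p), Finset.sum_add_distrib]
  congr 1
  simp [DdOp, adEta0, map_sum]

theorem cShift_DdOp (σ : ℕ → ℕ → g0) :
    cShift q (DdOp d0 σ) = DdOp d0 (cShift q σ) := by
  funext k n
  simp only [cShift, DdOp]
  split_ifs <;> simp

theorem cShift_BrOp_left (ρ : ℕ → ℕ → g1) (σ : ℕ → ℕ → g0) :
    BrOp br10 (cShift q ρ) σ = cShift q (BrOp br10 ρ σ) := by
  funext k n
  simp only [BrOp, cShift]
  have inner : ∀ p : ℕ × ℕ,
      ∑ r ∈ Finset.HasAntidiagonal.antidiagonal n,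
          br10 (if q + 1 ≤ r.1 then ((q : ℚ) + 1)⁻¹ • ρ p.1 (r.1 - (q + 1)) else 0)
            (σ p.2 r.2)
        = if q + 1 ≤ n then
            ∑ s ∈ Finset.HasAntidiagonal.antidiagonal (n - (q + 1)),
              ((q : ℚ) + 1)⁻¹ • br10 (ρ p.1 s.1) (σ p.2 s.2)
          else 0 := by
    intro p
    rw [← sum_antidiagonal_shift (q + 1) n
      (fun a b => ((q : ℚ) + 1)⁻¹ • br10 (ρ p.1 a) (σ p.2 b))]
    refine Finset.sum_congr rfl (fun r _ => ?_)
    split_ifs <;> simp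
  rw [Finset.sum_congr rfl (fun p _ => inner p)]
  split_ifs with h
  · rw [Finset.smul_sum]
    refine Finset.sum_congr rfl (fun p _ => ?_)
    rw [Finset.smul_sum]
  · exact Finset.sum_const_zero

theorem cShift_BrOp_right (ρ : ℕ → ℕ → g1) (σ : ℕ → ℕ → g0) :
    BrOp br10 ρ (cShift q σ) = cShift q (BrOp br10 ρ σ) := by
  funext k n
  simp only [BrOp, cShift]
  have inner : ∀ p : ℕ × ℕ,
      ∑ r ∈ Finset.HasAntidiagonal.antidiagonal n,
          br10 (ρ p.1 r.1)
            (if q + 1 ≤ r.2 then ((q : ℚ) + 1)⁻¹ • σ p.2 (r.2 - (q + 1)) else 0)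
        = if q + 1 ≤ n then
            ∑ s ∈ Finset.HasAntidiagonal.antidiagonal (n - (q + 1)),
              ((q : ℚ) + 1)⁻¹ • br10 (ρ p.1 s.1) (σ p.2 s.2)
          else 0 := by
    intro p
    rw [← Finset.Nat.sum_antidiagonal_swap
      (f := fun r => br10 (ρ p.1 r.1)
        (if q + 1 ≤ r.2 then ((q : ℚ) + 1)⁻¹ • σ p.2 (r.2 - (q + 1)) else 0))]
    simp only [Prod.fst_swap, Prod.snd_swap]
    rw [show (∑ r ∈ Finset.HasAntidiagonal.antidiagonal n, br10 (ρ p.1 r.2)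
          (if q + 1 ≤ r.1 then ((q : ℚ) + 1)⁻¹ • σ p.2 (r.1 - (q + 1)) else 0))
        = ∑ r ∈ Finset.HasAntidiagonal.antidiagonal n, (if q + 1 ≤ r.1 then
            ((q : ℚ) + 1)⁻¹ • br10 (ρ p.1 r.2) (σ p.2 (r.1 - (q + 1))) else 0) from
      Finset.sum_congr rfl (fun r _ => by split_ifs <;> simp)]
    rw [sum_antidiagonal_shift (q + 1) n
      (fun a b => ((q : ℚ) + 1)⁻¹ • br10 (ρ p.1 b) (σ p.2 a))]
    split_ifs with h
    · exact Finset.Nat.sum_antidiagonal_swap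
        (f := fun s => ((q : ℚ) + 1)⁻¹ • br10 (ρ p.1 s.1) (σ p.2 s.2))
    · rfl
  rw [Finset.sum_congr rfl (fun p _ => inner p)]
  split_ifs with h
  · rw [Finset.smul_sum]
    refine Finset.sum_congr rfl (fun p _ => ?_)
    rw [Finset.smul_sum]
  · exact Finset.sum_const_zero

end BrSec

/-! ### More helpers -/

section Generic2

variable {V : Type*} [AddCommGroup V] [Module ℚ V]
variable (br : V →ₗ[ℚ] g0 →ₗ[ℚ] V) (η : ℕ → g0) (q : ℕ)

theorem TOp_zero : TOp br η q (0 : ℕ → ℕ → V) = 0 := by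
  funext k n
  simp [TOp, cShift, adEta1]

theorem Titer_zero (m : ℕ) : (TOp br η q)^[m] (0 : ℕ → ℕ → V) = 0 := by
  induction m with
  | zero => rfl
  | succ m ih => rw [Function.iterate_succ_apply, TOp_zero, ih]

theorem TOp_finsum {ι : Type*} (s : Finset ι) (f : ι → ℕ → ℕ → V) :
    TOp br η q (∑ i ∈ s, f i) = ∑ i ∈ s, TOp br η q (f i) := by
  classical
  induction s using Finset.cons_induction with
  | empty => simp [TOp_zero]
  | cons a s ha ih => rw [Finset.sum_cons, Finset.sum_cons, TOp_add, ih]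

theorem TOp_cShift (ρ : ℕ → ℕ → V) :
    TOp br η q (cShift q ρ) = cShift q (TOp br η q ρ) := by
  rw [TOp_apply, TOp_apply, ← cShift_adEta1]

theorem Titer_cShift (m : ℕ) (ρ : ℕ → ℕ → V) :
    (TOp br η q)^[m] (cShift q ρ) = cShift q ((TOp br η q)^[m] ρ) := by
  induction m generalizing ρ with
  | zero => rfl
  | succ m ih => rw [Function.iterate_succ_apply, Function.iterate_succ_apply, TOp_cShift, ih]

theorem DtOp_add (ρ σ : ℕ → ℕ → V) : DtOp (ρ + σ) = DtOp ρ + DtOp σ := by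
  funext k n
  simp [DtOp, smul_add]

theorem DtOp_smul (c : ℚ) (ρ : ℕ → ℕ → V) : DtOp (c • ρ) = c • DtOp ρ := by
  funext k n
  simp only [DtOp, Pi.smul_apply]
  exact smul_comm _ _ _

theorem DtOp_zero : DtOp (0 : ℕ → ℕ → V) = 0 := by
  funext k n
  simp [DtOp]

theorem DtOp_finsum {ι : Type*} (s : Finset ι) (f : ι → ℕ → ℕ → V) :
    DtOp (∑ i ∈ s, f i) = ∑ i ∈ s, DtOp (f i) := by
  classical
  induction s using Finset.cons_induction with
  | empty => simp [DtOp_zero]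
  | cons a s ha ih => rw [Finset.sum_cons, Finset.sum_cons, DtOp_add, ih]

theorem PmulOp_smul (c : ℚ) (ρ : ℕ → ℕ → V) :
    PmulOp q (c • ρ) = c • PmulOp q ρ := by
  funext k n
  simp only [PmulOp, Pi.smul_apply]
  split_ifs <;> simp

theorem adEta1_finsum {ι : Type*} (s : Finset ι) (f : ι → ℕ → ℕ → V) :
    adEta1 br η (∑ i ∈ s, f i) = ∑ i ∈ s, adEta1 br η (f i) := by
  classical
  induction s using Finset.cons_induction with
  | empty => funext k n; simp [adEta1]
  | cons a s ha ih => rw [Finset.sum_cons, Finset.sum_cons, adEta1_add, ih]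

theorem PmulOp_finsum {ι : Type*} (s : Finset ι) (f : ι → ℕ → ℕ → V) :
    PmulOp q (∑ i ∈ s, f i) = ∑ i ∈ s, PmulOp q (f i) := by
  classical
  induction s using Finset.cons_induction with
  | empty => funext k n; simp [PmulOp]
  | cons a s ha ih =>
    rw [Finset.sum_cons, Finset.sum_cons]
    rw [show PmulOp q (f a + ∑ i ∈ s, f i) = PmulOp q (f a) + PmulOp q (∑ i ∈ s, f i) from by
      funext k n
      simp only [PmulOp, Pi.add_apply]
      split_ifs <;> simp, ih]

/-- `d/dt (c(t) · T^[m] ρ) = (m+1) t^q T^[m] ρ` when `dρ/dt = 0`. -/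
theorem Dt_cShift_Titer {ρ : ℕ → ℕ → V} (hρ : DtOp ρ = 0) (m : ℕ) :
    DtOp (cShift q ((TOp br η q)^[m] ρ))
      = ((m : ℚ) + 1) • PmulOp q ((TOp br η q)^[m] ρ) := by
  cases m with
  | zero =>
    simp only [Function.iterate_zero_apply]
    rw [Dt_cShift, hρ,
      show cShift q (0 : ℕ → ℕ → V) = 0 from by funext k n; simp [cShift]]
    norm_num
  | succ j =>
    rw [Dt_cShift, Dt_Titer, hρ, Titer_zero, zero_add, cShift_smul, Pq_cShift,
      ← TOp_apply, ← Function.iterate_succ_apply' (TOp br η q) j ρ]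
    push_cast
    module

end Generic2

/-! ### Pascal / factorial combinatorics -/

theorem inv_fact_choose (i m : ℕ) (h : i ≤ m) :
    ((m.factorial : ℚ))⁻¹ * (m.choose i) = (i.factorial : ℚ)⁻¹ * ((m - i).factorial : ℚ)⁻¹ := by
  have h2 := Nat.choose_mul_factorial_mul_factorial h
  have h3 : (m.choose i : ℚ) * i.factorial * (m - i).factorial = m.factorial := by
    exact_mod_cast congrArg (Nat.cast : ℕ → ℚ) h2
  have f1 : (i.factorial : ℚ) ≠ 0 := Nat.cast_ne_zero.2 (Nat.factorial_ne_zero i)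
  have f2 : ((m - i).factorial : ℚ) ≠ 0 := Nat.cast_ne_zero.2 (Nat.factorial_ne_zero _)
  have f3 : (m.factorial : ℚ) ≠ 0 := Nat.cast_ne_zero.2 (Nat.factorial_ne_zero m)
  field_simp
  linarith [h3]

theorem hockey_stick (a m : ℕ) (hm : 1 ≤ m) :
    ∑ j ∈ Finset.Icc a (m - 1), (j.choose a) = m.choose (a + 1) := by
  have := Nat.sum_Icc_choose (m - 1) a
  rwa [show m - 1 + 1 = m from by omega] at this

theorem pascal_sum {W : Type*} [AddCommGroup W] [Module ℚ W] (m : ℕ) (g : ℕ → W) :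
    ∑ i ∈ Finset.range (m + 2), (((m + 1).choose i : ℚ)) • g i
      = (∑ i ∈ Finset.range (m + 1), ((m.choose i : ℚ)) • g i)
        + ∑ i ∈ Finset.range (m + 1), ((m.choose i : ℚ)) • g (i + 1) := by
  rw [Finset.sum_range_succ' (fun i => (((m + 1).choose i : ℚ)) • g i) (m + 1)]
  have step : ∀ i ∈ Finset.range (m + 1),
      (((m + 1).choose (i + 1) : ℚ)) • g (i + 1)
        = ((m.choose i : ℚ)) • g (i + 1) + ((m.choose (i + 1) : ℚ)) • g (i + 1) := by
    intro i _
    rw [Nat.choose_succ_succ m i]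
    push_cast
    rw [add_smul]
  rw [Finset.sum_congr rfl step, Finset.sum_add_distrib,
    Finset.sum_range_succ' (fun i => ((m.choose i : ℚ)) • g i) m,
    Finset.sum_range_succ (fun i => ((m.choose (i + 1) : ℚ)) • g (i + 1)) m]
  simp only [Nat.choose_succ_self, Nat.cast_zero, zero_smul, add_zero,
    Nat.choose_zero_right, Nat.cast_one, one_smul]
  abel

theorem range_triangle_swap {V : Type*} [AddCommMonoid V] (m : ℕ) (f : ℕ → ℕ → V) :
    ∑ j ∈ Finset.range m, ∑ a ∈ Finset.range (j + 1), f a j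
      = ∑ a ∈ Finset.range m, ∑ j ∈ Finset.Icc a (m - 1), f a j := by
  rw [Finset.sum_sigma', Finset.sum_sigma']
  refine Finset.sum_nbij' (fun x => ⟨x.2, x.1⟩) (fun x => ⟨x.2, x.1⟩) ?_ ?_ ?_ ?_ ?_
  · rintro ⟨j, a⟩ hx
    simp only [Finset.mem_sigma, Finset.mem_range, Finset.mem_Icc] at hx ⊢
    omega
  · rintro ⟨a, j⟩ hx
    simp only [Finset.mem_sigma, Finset.mem_range, Finset.mem_Icc] at hx ⊢
    omega
  · rintro ⟨j, a⟩ hx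
    rfl
  · rintro ⟨a, j⟩ hx
    rfl
  · rintro ⟨j, a⟩ hx
    rfl

section BrSec2

variable (br10 : g1 →ₗ[ℚ] g0 →ₗ[ℚ] g1) (br00 : g0 →ₗ[ℚ] g0 →ₗ[ℚ] g0)
variable (d0 : g0 →ₗ[ℚ] g1) (η : ℕ → g0) (q : ℕ)

theorem TOp_BrOp
    (hJac10 : ∀ (a : g1) (x y : g0),
      br10 (br10 a x) y - br10 (br10 a y) x = br10 a (br00 x y))
    (ρ : ℕ → ℕ → g1) (σ : ℕ → ℕ → g0) :
    TOp br10 η q (BrOp br10 ρ σ)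
      = BrOp br10 (TOp br10 η q ρ) σ + BrOp br10 ρ (TOp br00 η q σ) := by
  rw [TOp_apply, adEta1_BrOp br10 br00 η hJac10, cShift_add,
    ← cShift_BrOp_left, ← cShift_BrOp_right]
  rfl

theorem Titer_BrOp
    (hJac10 : ∀ (a : g1) (x y : g0),
      br10 (br10 a x) y - br10 (br10 a y) x = br10 a (br00 x y))
    (m : ℕ) (ρ : ℕ → ℕ → g1) (σ : ℕ → ℕ → g0) :
    (TOp br10 η q)^[m] (BrOp br10 ρ σ)
      = ∑ i ∈ Finset.range (m + 1), ((m.choose i : ℚ)) •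
          BrOp br10 ((TOp br10 η q)^[i] ρ) ((TOp br00 η q)^[m - i] σ) := by
  induction m with
  | zero => simp
  | succ m ih =>
    rw [Function.iterate_succ_apply', ih, TOp_finsum]
    have expand : ∀ i ∈ Finset.range (m + 1),
        TOp br10 η q (((m.choose i : ℚ)) •
            BrOp br10 ((TOp br10 η q)^[i] ρ) ((TOp br00 η q)^[m - i] σ))
          = ((m.choose i : ℚ)) •
              BrOp br10 ((TOp br10 η q)^[i + 1] ρ) ((TOp br00 η q)^[m + 1 - (i + 1)] σ)
            + ((m.choose i : ℚ)) •
                BrOp br10 ((TOp br10 η q)^[i] ρ) ((TOp br00 η q)^[m + 1 - i] σ) := by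
      intro i hi
      rw [Finset.mem_range] at hi
      rw [TOp_smul, TOp_BrOp br10 br00 η q hJac10, smul_add,
        ← Function.iterate_succ_apply' (TOp br10 η q) i ρ,
        ← Function.iterate_succ_apply' (TOp br00 η q) (m - i) σ]
      simp only [Nat.succ_eq_add_one]
      rw [show m - i + 1 = m + 1 - i from by omega,
        show m - i = m + 1 - (i + 1) from by omega]
    rw [Finset.sum_congr rfl expand, Finset.sum_add_distrib,
      pascal_sum m (fun i => BrOp br10 ((TOp br10 η q)^[i] ρ)
        ((TOp br00 η q)^[m + 1 - i] σ))]
    abel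

theorem TOp_DdOp
    (hcocycle : ∀ x y : g0, d0 (br00 x y) = br10 (d0 x) y - br10 (d0 y) x)
    (σ : ℕ → ℕ → g0) :
    TOp br10 η q (DdOp d0 σ)
      = DdOp d0 (TOp br00 η q σ)
        + cShift q (BrOp br10 (fun i j => if j = 0 then d0 (η i) else 0) σ) := by
  rw [TOp_apply, adEta1_DdOp br10 br00 d0 η hcocycle, cShift_add, cShift_DdOp]
  rfl

theorem Titer_DdOp
    (hcocycle : ∀ x y : g0, d0 (br00 x y) = br10 (d0 x) y - br10 (d0 y) x)
    (m : ℕ) (σ : ℕ → ℕ → g0) :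
    (TOp br10 η q)^[m] (DdOp d0 σ)
      = DdOp d0 ((TOp br00 η q)^[m] σ)
        + ∑ j ∈ Finset.range m, (TOp br10 η q)^[j]
            (cShift q (BrOp br10 (fun i l => if l = 0 then d0 (η i) else 0)
              ((TOp br00 η q)^[m - 1 - j] σ))) := by
  induction m generalizing σ with
  | zero => simp
  | succ m ih =>
    rw [Function.iterate_succ_apply, TOp_DdOp br10 br00 d0 η q hcocycle,
      Titer_add, ih (TOp br00 η q σ),
      ← Function.iterate_succ_apply (TOp br00 η q) m σ]
    have e1 : ∀ j ∈ Finset.range m,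
        (TOp br10 η q)^[j] (cShift q
          (BrOp br10 (fun i l => if l = 0 then d0 (η i) else 0)
            ((TOp br00 η q)^[m - 1 - j] (TOp br00 η q σ))))
          = (TOp br10 η q)^[j] (cShift q
              (BrOp br10 (fun i l => if l = 0 then d0 (η i) else 0)
                ((TOp br00 η q)^[m + 1 - 1 - j] σ))) := by
      intro j hj
      rw [Finset.mem_range] at hj
      rw [← Function.iterate_succ_apply (TOp br00 η q) (m - 1 - j) σ]
      simp only [Nat.succ_eq_add_one]
      rw [show m - 1 - j + 1 = m + 1 - 1 - j from by omega]
    rw [Finset.sum_congr rfl e1, Finset.sum_range_succ,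
      show m + 1 - 1 - m = 0 from by omega, Function.iterate_zero_apply]
    abel

end BrSec2

section ExpSec

variable (br10 : g1 →ₗ[ℚ] g0 →ₗ[ℚ] g1) (br00 : g0 →ₗ[ℚ] g0 →ₗ[ℚ] g0)
variable (d0 : g0 →ₗ[ℚ] g1) (η : ℕ → g0) (q : ℕ)

theorem cShift_finsum {V : Type*} [AddCommGroup V] [Module ℚ V]
    {ι : Type*} (s : Finset ι) (f : ι → ℕ → ℕ → V) :
    cShift q (∑ i ∈ s, f i) = ∑ i ∈ s, cShift q (f i) := by
  classical
  induction s using Finset.cons_induction with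
  | empty => funext k n; simp [cShift]
  | cons a s ha ih => rw [Finset.sum_cons, Finset.sum_cons, cShift_add, ih]

theorem DdOp_smul (c : ℚ) (σ : ℕ → ℕ → g0) :
    DdOp d0 (c • σ) = c • DdOp d0 σ := by
  funext k n
  simp [DdOp]

theorem DdOp_finsum {ι : Type*} (s : Finset ι) (f : ι → ℕ → ℕ → g0) :
    DdOp d0 (∑ i ∈ s, f i) = ∑ i ∈ s, DdOp d0 (f i) := by
  funext k n
  simp [DdOp]

/-- Truncated exponential is an automorphism at `ℏ`-level `k`. -/
theorem exp_BrOp (hη0 : η 0 = 0)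
    (hJac10 : ∀ (a : g1) (x y : g0),
      br10 (br10 a x) y - br10 (br10 a y) x = br10 a (br00 x y))
    (k n : ℕ) (ρ : ℕ → ℕ → g1) (σ : ℕ → ℕ → g0) :
    ∑ m ∈ Finset.range (k + 1),
        (m.factorial : ℚ)⁻¹ • ((TOp br10 η q)^[m] (BrOp br10 ρ σ)) k n
      = BrOp br10
          (∑ i ∈ Finset.range (k + 1), (i.factorial : ℚ)⁻¹ • (TOp br10 η q)^[i] ρ)
          (∑ j ∈ Finset.range (k + 1), (j.factorial : ℚ)⁻¹ • (TOp br00 η q)^[j] σ)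
          k n := by
  have hvan : ∀ i j : ℕ, k < i + j →
      BrOp br10 ((TOp br10 η q)^[i] ρ) ((TOp br00 η q)^[j] σ) k n = 0 := by
    intro i j hij
    exact BrOp_low br10 (Titer_low' br10 η q hη0 ρ) (Titer_low' br00 η q hη0 σ) k n hij
  -- RHS expansion
  have hR : BrOp br10
          (∑ i ∈ Finset.range (k + 1), (i.factorial : ℚ)⁻¹ • (TOp br10 η q)^[i] ρ)
          (∑ j ∈ Finset.range (k + 1), (j.factorial : ℚ)⁻¹ • (TOp br00 η q)^[j] σ) k n
      = ∑ i ∈ Finset.range (k + 1), ∑ j ∈ Finset.range (k + 1),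
          ((i.factorial : ℚ)⁻¹ * (j.factorial : ℚ)⁻¹) •
            BrOp br10 ((TOp br10 η q)^[i] ρ) ((TOp br00 η q)^[j] σ) k n := by
    rw [BrOp_sum_left]
    have h1 : ∀ i : ℕ,
        BrOp br10 ((i.factorial : ℚ)⁻¹ • (TOp br10 η q)^[i] ρ)
            (∑ j ∈ Finset.range (k + 1), (j.factorial : ℚ)⁻¹ • (TOp br00 η q)^[j] σ)
          = ∑ j ∈ Finset.range (k + 1),
              ((i.factorial : ℚ)⁻¹ * (j.factorial : ℚ)⁻¹) •
                BrOp br10 ((TOp br10 η q)^[i] ρ) ((TOp br00 η q)^[j] σ) := by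
      intro i
      rw [BrOp_smul_left, BrOp_sum_right, Finset.smul_sum]
      refine Finset.sum_congr rfl (fun j _ => ?_)
      rw [BrOp_smul_right, smul_smul]
    rw [Finset.sum_congr rfl (fun i _ => h1 i)]
    simp [Finset.sum_apply, Pi.smul_apply]
  rw [hR]
  -- insert `ite` and use `triangle_square`
  have hIte : ∀ i ∈ Finset.range (k + 1), ∀ j ∈ Finset.range (k + 1),
      ((i.factorial : ℚ)⁻¹ * (j.factorial : ℚ)⁻¹) •
          BrOp br10 ((TOp br10 η q)^[i] ρ) ((TOp br00 η q)^[j] σ) k n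
        = (if i + j < k + 1 then
            ((i.factorial : ℚ)⁻¹ * (j.factorial : ℚ)⁻¹) •
              BrOp br10 ((TOp br10 η q)^[i] ρ) ((TOp br00 η q)^[j] σ) k n
          else 0) := by
    intro i _ j _
    split_ifs with h
    · rfl
    · rw [hvan i j (by omega), smul_zero]
  rw [Finset.sum_congr rfl (fun i hi =>
    Finset.sum_congr rfl (fun j hj => hIte i hi j hj)),
    triangle_square (k + 1) (fun i j =>
      ((i.factorial : ℚ)⁻¹ * (j.factorial : ℚ)⁻¹) •
        BrOp br10 ((TOp br10 η q)^[i] ρ) ((TOp br00 η q)^[j] σ) k n)]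
  -- LHS per `m`
  refine Finset.sum_congr rfl (fun m _ => ?_)
  rw [Titer_BrOp br10 br00 η q hJac10 m ρ σ]
  simp only [Finset.sum_apply, Pi.smul_apply]
  rw [Finset.smul_sum]
  refine Finset.sum_congr rfl (fun i hi => ?_)
  rw [Finset.mem_range] at hi
  rw [smul_smul, inv_fact_choose i m (by omega)]

/-- The key auxiliary identity at `ℏ`-level `k`:
`exp(c ad) ∘ d = d ∘ exp(c ad) + [((exp(c ad) − 1)/ad) dη, ·] ∘ exp(c ad)`. -/
theorem exp_DdOp (hη0 : η 0 = 0)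
    (hJac10 : ∀ (a : g1) (x y : g0),
      br10 (br10 a x) y - br10 (br10 a y) x = br10 a (br00 x y))
    (hcocycle : ∀ x y : g0, d0 (br00 x y) = br10 (d0 x) y - br10 (d0 y) x)
    (k n : ℕ) (σ : ℕ → ℕ → g0) :
    ∑ m ∈ Finset.range (k + 1),
        (m.factorial : ℚ)⁻¹ • ((TOp br10 η q)^[m] (DdOp d0 σ)) k n
      = (∑ m ∈ Finset.range (k + 1),
          (m.factorial : ℚ)⁻¹ • (DdOp d0 ((TOp br00 η q)^[m] σ)) k n)
        + BrOp br10
            (∑ a ∈ Finset.range (k + 1), (((a + 1).factorial : ℚ))⁻¹ •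
              cShift q ((TOp br10 η q)^[a] (fun i l => if l = 0 then d0 (η i) else 0)))
            (∑ b ∈ Finset.range (k + 1), (b.factorial : ℚ)⁻¹ • (TOp br00 η q)^[b] σ)
            k n := by
  set δf : ℕ → ℕ → g1 := fun i l => if l = 0 then d0 (η i) else 0 with hδf
  have hδlow : ∀ i n', i < 1 → δf i n' = 0 := by
    intro i n' hi
    have : i = 0 := by omega
    subst this
    simp [hδf, hη0]
  have hvan : ∀ a b : ℕ, ¬ (a + b < k) →
      cShift q (BrOp br10 ((TOp br10 η q)^[a] δf) ((TOp br00 η q)^[b] σ)) k n = 0 := by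
    intro a b hab
    refine cShift_low q (s := k + 1) ?_ k n (by omega)
    intro i n' hi
    refine BrOp_low br10 (Titer_low br10 η q hη0 hδlow a)
      (Titer_low' br00 η q hη0 σ) i n' (by omega)
  have hsplit : ∀ m ∈ Finset.range (k + 1),
      (m.factorial : ℚ)⁻¹ • ((TOp br10 η q)^[m] (DdOp d0 σ)) k n
        = (m.factorial : ℚ)⁻¹ • (DdOp d0 ((TOp br00 η q)^[m] σ)) k n
          + ∑ j ∈ Finset.range m, (m.factorial : ℚ)⁻¹ •
              ((TOp br10 η q)^[j]
                (cShift q (BrOp br10 δf ((TOp br00 η q)^[m - 1 - j] σ)))) k n := by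
    intro m _
    rw [Titer_DdOp br10 br00 d0 η q hcocycle m σ]
    simp only [Pi.add_apply, Finset.sum_apply, smul_add, Finset.smul_sum]
    rfl
  rw [Finset.sum_congr rfl hsplit, Finset.sum_add_distrib]
  congr 1
  -- remains: the double sum equals the bracket term
  have hinner : ∀ m : ℕ, ∀ j ∈ Finset.range m,
      (m.factorial : ℚ)⁻¹ •
          ((TOp br10 η q)^[j]
            (cShift q (BrOp br10 δf ((TOp br00 η q)^[m - 1 - j] σ)))) k n
        = ∑ a ∈ Finset.range (j + 1),
            ((m.factorial : ℚ)⁻¹ * (j.choose a : ℚ)) •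
              cShift q (BrOp br10 ((TOp br10 η q)^[a] δf)
                ((TOp br00 η q)^[m - 1 - a] σ)) k n := by
    intro m j hj
    rw [Finset.mem_range] at hj
    rw [Titer_cShift, Titer_BrOp br10 br00 η q hJac10 j δf ((TOp br00 η q)^[m - 1 - j] σ)]
    have e : ∀ a ∈ Finset.range (j + 1),
        ((j.choose a : ℚ)) • BrOp br10 ((TOp br10 η q)^[a] δf)
            ((TOp br00 η q)^[j - a] ((TOp br00 η q)^[m - 1 - j] σ))
          = ((j.choose a : ℚ)) • BrOp br10 ((TOp br10 η q)^[a] δf)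
              ((TOp br00 η q)^[m - 1 - a] σ) := by
      intro a ha
      rw [Finset.mem_range] at ha
      rw [← Function.iterate_add_apply (TOp br00 η q) (j - a) (m - 1 - j) σ,
        show j - a + (m - 1 - j) = m - 1 - a from by omega]
    rw [Finset.sum_congr rfl e, cShift_finsum]
    have e2 : ∀ a ∈ Finset.range (j + 1),
        cShift q (((j.choose a : ℚ)) • BrOp br10 ((TOp br10 η q)^[a] δf)
            ((TOp br00 η q)^[m - 1 - a] σ))
          = ((j.choose a : ℚ)) • cShift q (BrOp br10 ((TOp br10 η q)^[a] δf)
              ((TOp br00 η q)^[m - 1 - a] σ)) := by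
      intro a _
      rw [cShift_smul]
    rw [Finset.sum_congr rfl e2]
    simp only [Finset.sum_apply, Pi.smul_apply]
    rw [Finset.smul_sum]
    refine Finset.sum_congr rfl (fun a _ => ?_)
    rw [smul_smul]
  rw [Finset.sum_congr rfl (fun m _ => Finset.sum_congr rfl (fun j hj => hinner m j hj))]
  have hswap : ∀ m ∈ Finset.range (k + 1),
      ∑ j ∈ Finset.range m, ∑ a ∈ Finset.range (j + 1),
          ((m.factorial : ℚ)⁻¹ * (j.choose a : ℚ)) •
            cShift q (BrOp br10 ((TOp br10 η q)^[a] δf)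
              ((TOp br00 η q)^[m - 1 - a] σ)) k n
        = ∑ a ∈ Finset.range m,
            ((((a + 1).factorial : ℚ))⁻¹ * (((m - 1 - a).factorial : ℚ))⁻¹) •
              cShift q (BrOp br10 ((TOp br10 η q)^[a] δf)
                ((TOp br00 η q)^[m - 1 - a] σ)) k n := by
    intro m _
    rw [range_triangle_swap m (fun a j =>
      ((m.factorial : ℚ)⁻¹ * (j.choose a : ℚ)) •
        cShift q (BrOp br10 ((TOp br10 η q)^[a] δf)
          ((TOp br00 η q)^[m - 1 - a] σ)) k n)]
    refine Finset.sum_congr rfl (fun a ha => ?_)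
    rw [Finset.mem_range] at ha
    rw [← Finset.sum_smul, ← Finset.mul_sum,
      show (∑ j ∈ Finset.Icc a (m - 1), (j.choose a : ℚ))
        = ((∑ j ∈ Finset.Icc a (m - 1), j.choose a : ℕ) : ℚ) from by push_cast; rfl,
      hockey_stick a m (by omega), inv_fact_choose (a + 1) m (by omega),
      show m - (a + 1) = m - 1 - a from by omega]
  rw [Finset.sum_congr rfl hswap]
  -- reindex `m → m+1` and pass to the square
  rw [Finset.sum_range_succ' (fun m => ∑ a ∈ Finset.range m,
    ((((a + 1).factorial : ℚ))⁻¹ * (((m - 1 - a).factorial : ℚ))⁻¹) •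
      cShift q (BrOp br10 ((TOp br10 η q)^[a] δf)
        ((TOp br00 η q)^[m - 1 - a] σ)) k n) k]
  simp only [Nat.add_sub_cancel, Finset.range_zero, Finset.sum_empty, add_zero]
  rw [triangle_square k (fun a b =>
    ((((a + 1).factorial : ℚ))⁻¹ * ((b.factorial : ℚ))⁻¹) •
      cShift q (BrOp br10 ((TOp br10 η q)^[a] δf)
        ((TOp br00 η q)^[b] σ)) k n) |>.symm]
  -- drop the `ite` and extend the ranges
  have hG0 : ∀ a b : ℕ, ¬ (a + b < k) →
      ((((a + 1).factorial : ℚ))⁻¹ * ((b.factorial : ℚ))⁻¹) •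
        cShift q (BrOp br10 ((TOp br10 η q)^[a] δf)
          ((TOp br00 η q)^[b] σ)) k n = 0 := by
    intro a b hab
    rw [hvan a b hab, smul_zero]
  have hsq : ∑ i ∈ Finset.range k, ∑ j ∈ Finset.range k,
        (if i + j < k then
          ((((i + 1).factorial : ℚ))⁻¹ * ((j.factorial : ℚ))⁻¹) •
            cShift q (BrOp br10 ((TOp br10 η q)^[i] δf)
              ((TOp br00 η q)^[j] σ)) k n
        else 0)
      = ∑ i ∈ Finset.range (k + 1), ∑ j ∈ Finset.range (k + 1),
          ((((i + 1).factorial : ℚ))⁻¹ * ((j.factorial : ℚ))⁻¹) •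
            cShift q (BrOp br10 ((TOp br10 η q)^[i] δf)
              ((TOp br00 η q)^[j] σ)) k n := by
    have step1 : ∀ i ∈ Finset.range k,
        ∑ j ∈ Finset.range k,
          (if i + j < k then
            ((((i + 1).factorial : ℚ))⁻¹ * ((j.factorial : ℚ))⁻¹) •
              cShift q (BrOp br10 ((TOp br10 η q)^[i] δf)
                ((TOp br00 η q)^[j] σ)) k n
          else 0)
        = ∑ j ∈ Finset.range (k + 1),
            ((((i + 1).factorial : ℚ))⁻¹ * ((j.factorial : ℚ))⁻¹) •
              cShift q (BrOp br10 ((TOp br10 η q)^[i] δf)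
                ((TOp br00 η q)^[j] σ)) k n := by
      intro i _
      rw [show (∑ j ∈ Finset.range k,
          (if i + j < k then
            ((((i + 1).factorial : ℚ))⁻¹ * ((j.factorial : ℚ))⁻¹) •
              cShift q (BrOp br10 ((TOp br10 η q)^[i] δf)
                ((TOp br00 η q)^[j] σ)) k n
          else 0))
          = ∑ j ∈ Finset.range k,
              ((((i + 1).factorial : ℚ))⁻¹ * ((j.factorial : ℚ))⁻¹) •
                cShift q (BrOp br10 ((TOp br10 η q)^[i] δf)
                  ((TOp br00 η q)^[j] σ)) k n from
        Finset.sum_congr rfl (fun j _ => by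
          split_ifs with h
          · rfl
          · exact (hG0 i j h).symm)]
      refine Finset.sum_subset (Finset.range_subset_range.2 (by omega)) ?_
      intro j _ hj
      rw [Finset.mem_range] at hj
      exact hG0 i j (by omega)
    rw [Finset.sum_congr rfl step1]
    refine Finset.sum_subset (Finset.range_subset_range.2 (by omega)) ?_
    intro i _ hi
    rw [Finset.mem_range] at hi
    refine Finset.sum_eq_zero (fun j _ => hG0 i j (by omega))
  rw [hsq]
  -- expand the RHS bracket
  have hR : BrOp br10
        (∑ a ∈ Finset.range (k + 1), (((a + 1).factorial : ℚ))⁻¹ •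
          cShift q ((TOp br10 η q)^[a] δf))
        (∑ b ∈ Finset.range (k + 1), (b.factorial : ℚ)⁻¹ • (TOp br00 η q)^[b] σ) k n
      = ∑ a ∈ Finset.range (k + 1), ∑ b ∈ Finset.range (k + 1),
          ((((a + 1).factorial : ℚ))⁻¹ * ((b.factorial : ℚ))⁻¹) •
            cShift q (BrOp br10 ((TOp br10 η q)^[a] δf)
              ((TOp br00 η q)^[b] σ)) k n := by
    rw [BrOp_sum_left]
    have h1 : ∀ a : ℕ,
        BrOp br10 ((((a + 1).factorial : ℚ))⁻¹ • cShift q ((TOp br10 η q)^[a] δf))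
            (∑ b ∈ Finset.range (k + 1), (b.factorial : ℚ)⁻¹ • (TOp br00 η q)^[b] σ)
          = ∑ b ∈ Finset.range (k + 1),
              ((((a + 1).factorial : ℚ))⁻¹ * ((b.factorial : ℚ))⁻¹) •
                cShift q (BrOp br10 ((TOp br10 η q)^[a] δf) ((TOp br00 η q)^[b] σ)) := by
      intro a
      rw [BrOp_smul_left, BrOp_sum_right, Finset.smul_sum]
      refine Finset.sum_congr rfl (fun b _ => ?_)
      rw [BrOp_smul_right, smul_smul, cShift_BrOp_left]
    rw [Finset.sum_congr rfl (fun a _ => h1 a)]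
    simp [Finset.sum_apply, Pi.smul_apply]
  rw [hR]


theorem ffact_inv (i : ℕ) :
    ((i + 1).factorial : ℚ)⁻¹ * ((i : ℚ) + 1) = (i.factorial : ℚ)⁻¹ := by
  rw [Nat.factorial_succ]
  push_cast
  rw [mul_inv]
  have h1 : ((i : ℚ) + 1) ≠ 0 := by positivity
  have h2 : ((i.factorial : ℚ)) ≠ 0 := Nat.cast_ne_zero.2 (Nat.factorial_ne_zero i)
  field_simp

/-- The main computation, phrased for the truncated exponentials. -/
theorem assembly (hη0 : η 0 = 0)
    (hJac10 : ∀ (a : g1) (x y : g0),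
      br10 (br10 a x) y - br10 (br10 a y) x = br10 a (br00 x y))
    (hcocycle : ∀ x y : g0, d0 (br00 x y) = br10 (d0 x) y - br10 (d0 y) x)
    (k n : ℕ) (α : ℕ → ℕ → g1) (ξ : ℕ → ℕ → g0)
    (hODEf : DtOp α = DdOp d0 ξ + BrOp br10 α ξ) :
    DtOp ((∑ m ∈ Finset.range (k + 1), (m.factorial : ℚ)⁻¹ • (TOp br10 η q)^[m] α)
        + ∑ m ∈ Finset.range (k + 1), ((m + 1).factorial : ℚ)⁻¹ •
            cShift q ((TOp br10 η q)^[m] (fun i l => if l = 0 then d0 (η i) else 0))) k n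
      = DdOp d0 ((fun i j => if j = q then η i else 0)
          + ∑ m ∈ Finset.range (k + 1), (m.factorial : ℚ)⁻¹ • (TOp br00 η q)^[m] ξ) k n
        + BrOp br10
            ((∑ m ∈ Finset.range (k + 1), (m.factorial : ℚ)⁻¹ • (TOp br10 η q)^[m] α)
              + ∑ m ∈ Finset.range (k + 1), ((m + 1).factorial : ℚ)⁻¹ •
                  cShift q ((TOp br10 η q)^[m] (fun i l => if l = 0 then d0 (η i) else 0)))
            ((fun i j => if j = q then η i else 0)
              + ∑ m ∈ Finset.range (k + 1), (m.factorial : ℚ)⁻¹ • (TOp br00 η q)^[m] ξ)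
            k n := by
  have hδfDt : DtOp (fun i l => if l = 0 then d0 (η i) else 0 : ℕ → ℕ → g1) = 0 := by
    funext a b
    simp [DtOp]
  have hδlow : ∀ i n', i < 1 →
      (fun i l => if l = 0 then d0 (η i) else 0 : ℕ → ℕ → g1) i n' = 0 := by
    intro i n' hi
    have : i = 0 := by omega
    subst this
    simp [hη0]
  -- (P1) derivative of the first exponential
  have hDtA : DtOp (∑ m ∈ Finset.range (k + 1), (m.factorial : ℚ)⁻¹ • (TOp br10 η q)^[m] α)
      = ((∑ m ∈ Finset.range (k + 1), (m.factorial : ℚ)⁻¹ •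
            (TOp br10 η q)^[m] (DdOp d0 ξ))
          + ∑ m ∈ Finset.range (k + 1), (m.factorial : ℚ)⁻¹ •
              (TOp br10 η q)^[m] (BrOp br10 α ξ))
        + ∑ m ∈ Finset.range k, (m.factorial : ℚ)⁻¹ •
            PmulOp q (adEta1 br10 η ((TOp br10 η q)^[m] α)) := by
    rw [DtOp_finsum, Finset.sum_congr rfl (fun m _ => DtOp_smul (m.factorial : ℚ)⁻¹ _),
      Finset.sum_range_succ' (fun m => (m.factorial : ℚ)⁻¹ • DtOp ((TOp br10 η q)^[m] α)) k]
    have e2 : ∀ i ∈ Finset.range k,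
        ((i + 1).factorial : ℚ)⁻¹ • DtOp ((TOp br10 η q)^[i + 1] α)
          = ((i + 1).factorial : ℚ)⁻¹ • (TOp br10 η q)^[i + 1] (DtOp α)
            + (i.factorial : ℚ)⁻¹ •
                PmulOp q (adEta1 br10 η ((TOp br10 η q)^[i] α)) := by
      intro i _
      rw [Dt_Titer, smul_add, smul_smul, ffact_inv]
    rw [Finset.sum_congr rfl e2, Finset.sum_add_distrib]
    rw [show ((Nat.factorial 0 : ℚ))⁻¹ = 1 from by norm_num, one_smul,
      Function.iterate_zero_apply, hODEf]
    have e5 : ∀ i ∈ Finset.range k,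
        ((i + 1).factorial : ℚ)⁻¹ •
            (TOp br10 η q)^[i + 1] (DdOp d0 ξ + BrOp br10 α ξ)
          = ((i + 1).factorial : ℚ)⁻¹ • (TOp br10 η q)^[i + 1] (DdOp d0 ξ)
            + ((i + 1).factorial : ℚ)⁻¹ • (TOp br10 η q)^[i + 1] (BrOp br10 α ξ) := by
      intro i _
      rw [Titer_add, smul_add]
    rw [Finset.sum_congr rfl e5, Finset.sum_add_distrib,
      Finset.sum_range_succ' (fun m => (m.factorial : ℚ)⁻¹ •
        (TOp br10 η q)^[m] (DdOp d0 ξ)) k,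
      Finset.sum_range_succ' (fun m => (m.factorial : ℚ)⁻¹ •
        (TOp br10 η q)^[m] (BrOp br10 α ξ)) k,
      show ((Nat.factorial 0 : ℚ))⁻¹ = 1 from by norm_num, one_smul, one_smul,
      Function.iterate_zero_apply, Function.iterate_zero_apply]
    abel
  -- (P2) derivative of the second part
  have hDtB : DtOp (∑ m ∈ Finset.range (k + 1), ((m + 1).factorial : ℚ)⁻¹ •
        cShift q ((TOp br10 η q)^[m] (fun i l => if l = 0 then d0 (η i) else 0)))
      = ∑ m ∈ Finset.range (k + 1), (m.factorial : ℚ)⁻¹ •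
          PmulOp q ((TOp br10 η q)^[m] (fun i l => if l = 0 then d0 (η i) else 0)) := by
    rw [DtOp_finsum, Finset.sum_congr rfl (fun m _ => DtOp_smul ((m + 1).factorial : ℚ)⁻¹ _)]
    refine Finset.sum_congr rfl (fun m _ => ?_)
    rw [Dt_cShift_Titer br10 η q hδfDt m, smul_smul, ffact_inv]
  -- (P3)
  have h5 : DdOp d0 (fun i j => if j = q then η i else 0 : ℕ → ℕ → g0)
      = PmulOp q (fun i l => if l = 0 then d0 (η i) else 0 : ℕ → ℕ → g1) := by
    funext a b
    simp only [DdOp, PmulOp]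
    by_cases hb : b = q
    · subst hb
      rw [if_pos rfl, if_pos (le_refl b), if_pos (by omega)]
    · rw [if_neg hb]
      split_ifs with h1 h2
      · omega
      · simp
      · simp
  -- (P4)
  have h3 : BrOp br10 (∑ m ∈ Finset.range (k + 1), (m.factorial : ℚ)⁻¹ •
        (TOp br10 η q)^[m] α) (fun i j => if j = q then η i else 0)
      = ∑ m ∈ Finset.range (k + 1), (m.factorial : ℚ)⁻¹ •
          PmulOp q (adEta1 br10 η ((TOp br10 η q)^[m] α)) := by
    rw [BrOp_etaq br10 η q, adEta1_finsum, PmulOp_finsum]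
    refine Finset.sum_congr rfl (fun m _ => ?_)
    rw [adEta1_smul, PmulOp_smul]
  -- (P5)
  have h4 : BrOp br10 (∑ m ∈ Finset.range (k + 1), ((m + 1).factorial : ℚ)⁻¹ •
        cShift q ((TOp br10 η q)^[m] (fun i l => if l = 0 then d0 (η i) else 0)))
        (fun i j => if j = q then η i else 0)
      = ∑ m ∈ Finset.range (k + 1), ((m + 1).factorial : ℚ)⁻¹ •
          PmulOp q ((TOp br10 η q)^[m + 1] (fun i l => if l = 0 then d0 (η i) else 0)) := by
    rw [BrOp_etaq br10 η q, adEta1_finsum, PmulOp_finsum]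
    refine Finset.sum_congr rfl (fun m _ => ?_)
    rw [adEta1_smul, PmulOp_smul, ← cShift_adEta1, ← TOp_apply,
      ← Function.iterate_succ_apply' (TOp br10 η q) m]
  -- (P6)
  have h6 : DdOp d0 (∑ m ∈ Finset.range (k + 1), (m.factorial : ℚ)⁻¹ •
        (TOp br00 η q)^[m] ξ)
      = ∑ m ∈ Finset.range (k + 1), (m.factorial : ℚ)⁻¹ • DdOp d0 ((TOp br00 η q)^[m] ξ) := by
    rw [DdOp_finsum]
    refine Finset.sum_congr rfl (fun m _ => ?_)
    rw [DdOp_smul]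
  -- evaluation-level extensions
  have E1 : ∑ m ∈ Finset.range k, ((m.factorial : ℚ)⁻¹ •
        PmulOp q (adEta1 br10 η ((TOp br10 η q)^[m] α))) k n
      = ∑ m ∈ Finset.range (k + 1), ((m.factorial : ℚ)⁻¹ •
          PmulOp q (adEta1 br10 η ((TOp br10 η q)^[m] α))) k n := by
    refine Finset.sum_subset (Finset.range_subset_range.2 (by omega)) ?_
    intro m hmem hm
    rw [Finset.mem_range] at hmem hm
    have hlow : ∀ i n', i < m + 1 → adEta1 br10 η ((TOp br10 η q)^[m] α) i n' = 0 :=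
      adEta1_low br10 η hη0 (Titer_low' br10 η q hη0 α)
    have hz : PmulOp q (adEta1 br10 η ((TOp br10 η q)^[m] α)) k n = 0 := by
      simp only [PmulOp]
      split_ifs
      · exact hlow k _ (by omega)
      · rfl
    rw [Pi.smul_apply, Pi.smul_apply, hz, smul_zero]
  have E2 : ∑ m ∈ Finset.range (k + 1), ((m.factorial : ℚ)⁻¹ •
        PmulOp q ((TOp br10 η q)^[m] (fun i l => if l = 0 then d0 (η i) else 0))) k n
      = (PmulOp q (fun i l => if l = 0 then d0 (η i) else 0 : ℕ → ℕ → g1)) k n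
        + ∑ m ∈ Finset.range (k + 1), (((m + 1).factorial : ℚ)⁻¹ •
            PmulOp q ((TOp br10 η q)^[m + 1]
              (fun i l => if l = 0 then d0 (η i) else 0))) k n := by
    rw [Finset.sum_range_succ' (fun m => ((m.factorial : ℚ)⁻¹ •
      PmulOp q ((TOp br10 η q)^[m] (fun i l => if l = 0 then d0 (η i) else 0))) k n) k]
    rw [show ((Nat.factorial 0 : ℚ)⁻¹ •
        PmulOp q ((TOp br10 η q)^[0] (fun i l => if l = 0 then d0 (η i) else 0))) k n
      = (PmulOp q (fun i l => if l = 0 then d0 (η i) else 0 : ℕ → ℕ → g1)) k n from by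
      simp]
    rw [add_comm]
    congr 1
    refine Finset.sum_subset (Finset.range_subset_range.2 (by omega)) ?_
    intro m hmem hm
    rw [Finset.mem_range] at hmem hm
    have hlow := Titer_low' br10 η q hη0
      (fun i l => if l = 0 then d0 (η i) else 0 : ℕ → ℕ → g1) (m := m + 1)
    have hz : PmulOp q ((TOp br10 η q)^[m + 1]
        (fun i l => if l = 0 then d0 (η i) else 0 : ℕ → ℕ → g1)) k n = 0 := by
      simp only [PmulOp]
      split_ifs
      · exact hlow k _ (by omega)
      · rfl
    rw [Pi.smul_apply, Pi.smul_apply, hz, smul_zero]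
  -- put everything together
  rw [DtOp_add, Pi.add_apply, hDtA, hDtB]
  rw [show ((fun i j => if j = q then η i else 0 : ℕ → ℕ → g0)
      + ∑ m ∈ Finset.range (k + 1), (m.factorial : ℚ)⁻¹ • (TOp br00 η q)^[m] ξ)
    = ((fun i j => if j = q then η i else 0 : ℕ → ℕ → g0)
      + ∑ m ∈ Finset.range (k + 1), (m.factorial : ℚ)⁻¹ • (TOp br00 η q)^[m] ξ) from rfl]
  rw [BrOp_add_left, BrOp_add_right, BrOp_add_right, h3, h4]
  rw [show DdOp d0 ((fun i j => if j = q then η i else 0 : ℕ → ℕ → g0)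
        + ∑ m ∈ Finset.range (k + 1), (m.factorial : ℚ)⁻¹ • (TOp br00 η q)^[m] ξ)
      = DdOp d0 (fun i j => if j = q then η i else 0 : ℕ → ℕ → g0)
        + DdOp d0 (∑ m ∈ Finset.range (k + 1), (m.factorial : ℚ)⁻¹ •
            (TOp br00 η q)^[m] ξ) from by
    funext a b
    simp [DdOp]]
  rw [h5, h6]
  simp only [Pi.add_apply, Finset.sum_apply, Pi.smul_apply]
  rw [exp_BrOp br10 br00 η q hη0 hJac10 k n α ξ,
    exp_DdOp br10 br00 d0 η q hη0 hJac10 hcocycle k n ξ]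
  simp only [Pi.smul_apply, Finset.sum_apply] at E1 E2 ⊢
  rw [← E1, E2]
  abel


end ExpSec

/-- Lemma B.8 of the paper: let `α(t)` be the solution of
`dα/dt = dξ + [α(t), ξ]`, `α(0) = α₀`, for a Maurer–Cartan element
`α₀ ∈ ℏ·L¹[[ℏ]]` and `ξ ∈ ℏ·(L⁰[t])[[ℏ]]`.  Then for every `η ∈ ℏ·L⁰[[ℏ]]` and
every `q ≥ 0`, the element
`λ(t) = exp((t^{q+1}/(q+1))[·,η]) α(t) + ((exp((t^{q+1}/(q+1))[·,η]) − 1)/[·,η]) dη`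
satisfies the differential equation `dλ(t)/dt = d ξ̃ + [λ(t), ξ̃]` with
`ξ̃ = t^q η + exp((t^{q+1}/(q+1))[·,η]) ξ` (coefficientwise in `ℏ` and `t`). -/
theorem statement17
    (d0 : g0 →ₗ[ℚ] g1) (d1 : g1 →ₗ[ℚ] g2)
    (br00 : g0 →ₗ[ℚ] g0 →ₗ[ℚ] g0)
    (br10 : g1 →ₗ[ℚ] g0 →ₗ[ℚ] g1)
    (br11 : g1 →ₗ[ℚ] g1 →ₗ[ℚ] g2)
    (hskew00 : ∀ x y : g0, br00 x y = - br00 y x)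
    (hJac00 : ∀ x y z : g0,
      br00 (br00 x y) z = br00 x (br00 y z) - br00 y (br00 x z))
    (hJac10 : ∀ (a : g1) (x y : g0),
      br10 (br10 a x) y - br10 (br10 a y) x = br10 a (br00 x y))
    (hcocycle : ∀ x y : g0, d0 (br00 x y) = br10 (d0 x) y - br10 (d0 y) x)
    (α₀ : ℕ → g1) (hα₀0 : α₀ 0 = 0)
    (hMC0 : ∀ k, d1 (α₀ k)
      + (2 : ℚ)⁻¹ • ∑ p ∈ Finset.HasAntidiagonal.antidiagonal k, br11 (α₀ p.1) (α₀ p.2) = 0)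
    (ξ : ℕ → ℕ → g0) (hξ0 : ∀ n, ξ 0 n = 0) (hξpoly : IsPolyInT ξ)
    (α : ℕ → ℕ → g1) (hαpoly : IsPolyInT α)
    (hinit : ∀ k, α k 0 = α₀ k)
    (hODE : ∀ k n, (n + 1 : ℕ) • α k (n + 1)
      = d0 (ξ k n)
        + ∑ p ∈ Finset.HasAntidiagonal.antidiagonal k, ∑ r ∈ Finset.HasAntidiagonal.antidiagonal n,
            br10 (α p.1 r.1) (ξ p.2 r.2))
    (η : ℕ → g0) (hη0 : η 0 = 0)
    (q : ℕ) :
    ∀ k n,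
      (n + 1 : ℕ) • lamEl br10 d0 q η α k (n + 1)
        = d0 (xiTilde br00 q η ξ k n)
          + ∑ p ∈ Finset.HasAntidiagonal.antidiagonal k, ∑ r ∈ Finset.HasAntidiagonal.antidiagonal n,
              br10 (lamEl br10 d0 q η α p.1 r.1)
                (xiTilde br00 q η ξ p.2 r.2) := by
  intro k n
  have hODEf : DtOp α = DdOp d0 ξ + BrOp br10 α ξ := by
    funext k' n'
    exact hODE k' n'
  -- identify `lamEl` with the truncated exponential at levels `≤ k`
  have hlam : ∀ p j, p ≤ k → lamEl br10 d0 q η α p j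
      = ((∑ m ∈ Finset.range (k + 1), (m.factorial : ℚ)⁻¹ • (TOp br10 η q)^[m] α)
          + ∑ m ∈ Finset.range (k + 1), ((m + 1).factorial : ℚ)⁻¹ •
              cShift q ((TOp br10 η q)^[m]
                (fun i l => if l = 0 then d0 (η i) else 0))) p j := by
    intro p j hp
    rw [lamEl, TOp_eq br10 η q]
    simp only [Pi.add_apply, Finset.sum_apply, Pi.smul_apply]
    congr 1
    · refine Finset.sum_subset (Finset.range_subset_range.2 (by omega)) ?_
      intro m hmem hm
      rw [Finset.mem_range] at hmem hm
      rw [Titer_low' br10 η q hη0 α p j (by omega), smul_zero]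
    · refine Finset.sum_subset (Finset.range_subset_range.2 (by omega)) ?_
      intro m hmem hm
      rw [Finset.mem_range] at hmem hm
      rw [cShift_low q (s := m) (Titer_low' br10 η q hη0 _) p j (by omega), smul_zero]
  have hxi : ∀ p j, p ≤ k → xiTilde br00 q η ξ p j
      = ((fun i j => if j = q then η i else 0)
          + ∑ m ∈ Finset.range (k + 1), (m.factorial : ℚ)⁻¹ • (TOp br00 η q)^[m] ξ) p j := by
    intro p j hp
    rw [xiTilde, show (fun ρ => cShift q (adEta0 br00 η ρ)) = TOp br00 η q from rfl]
    simp only [Pi.add_apply, Finset.sum_apply, Pi.smul_apply]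
    congr 1
    refine Finset.sum_subset (Finset.range_subset_range.2 (by omega)) ?_
    intro m hmem hm
    rw [Finset.mem_range] at hmem hm
    rw [Titer_low' br00 η q hη0 ξ p j (by omega), smul_zero]
  have key := assembly br10 br00 d0 η q hη0 hJac10 hcocycle k n α ξ hODEf
  calc (n + 1 : ℕ) • lamEl br10 d0 q η α k (n + 1)
      = DtOp ((∑ m ∈ Finset.range (k + 1), (m.factorial : ℚ)⁻¹ • (TOp br10 η q)^[m] α)
          + ∑ m ∈ Finset.range (k + 1), ((m + 1).factorial : ℚ)⁻¹ •
              cShift q ((TOp br10 η q)^[m]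
                (fun i l => if l = 0 then d0 (η i) else 0))) k n := by
        rw [show DtOp ((∑ m ∈ Finset.range (k + 1), (m.factorial : ℚ)⁻¹ •
              (TOp br10 η q)^[m] α)
            + ∑ m ∈ Finset.range (k + 1), ((m + 1).factorial : ℚ)⁻¹ •
                cShift q ((TOp br10 η q)^[m]
                  (fun i l => if l = 0 then d0 (η i) else 0))) k n
          = (n + 1 : ℕ) • ((∑ m ∈ Finset.range (k + 1), (m.factorial : ℚ)⁻¹ •
              (TOp br10 η q)^[m] α)
            + ∑ m ∈ Finset.range (k + 1), ((m + 1).factorial : ℚ)⁻¹ •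
                cShift q ((TOp br10 η q)^[m]
                  (fun i l => if l = 0 then d0 (η i) else 0))) k (n + 1) from rfl,
          ← hlam k (n + 1) (le_refl k)]
    _ = DdOp d0 ((fun i j => if j = q then η i else 0)
          + ∑ m ∈ Finset.range (k + 1), (m.factorial : ℚ)⁻¹ • (TOp br00 η q)^[m] ξ) k n
        + BrOp br10
            ((∑ m ∈ Finset.range (k + 1), (m.factorial : ℚ)⁻¹ • (TOp br10 η q)^[m] α)
              + ∑ m ∈ Finset.range (k + 1), ((m + 1).factorial : ℚ)⁻¹ •
                  cShift q ((TOp br10 η q)^[m]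
                    (fun i l => if l = 0 then d0 (η i) else 0)))
            ((fun i j => if j = q then η i else 0)
              + ∑ m ∈ Finset.range (k + 1), (m.factorial : ℚ)⁻¹ • (TOp br00 η q)^[m] ξ)
            k n := key
    _ = d0 (xiTilde br00 q η ξ k n)
          + ∑ p ∈ Finset.HasAntidiagonal.antidiagonal k, ∑ r ∈ Finset.HasAntidiagonal.antidiagonal n,
              br10 (lamEl br10 d0 q η α p.1 r.1) (xiTilde br00 q η ξ p.2 r.2) := by
        congr 1
        · rw [show DdOp d0 ((fun i j => if j = q then η i else 0)
              + ∑ m ∈ Finset.range (k + 1), (m.factorial : ℚ)⁻¹ •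
                  (TOp br00 η q)^[m] ξ) k n
            = d0 (((fun i j => if j = q then η i else 0)
              + ∑ m ∈ Finset.range (k + 1), (m.factorial : ℚ)⁻¹ •
                  (TOp br00 η q)^[m] ξ) k n) from rfl, ← hxi k n (le_refl k)]
        · rw [show (∑ p ∈ Finset.HasAntidiagonal.antidiagonal k, ∑ r ∈ Finset.HasAntidiagonal.antidiagonal n,
              br10 (lamEl br10 d0 q η α p.1 r.1) (xiTilde br00 q η ξ p.2 r.2))
            = BrOp br10 (lamEl br10 d0 q η α) (xiTilde br00 q η ξ) k n from rfl]
          exact (BrOp_congr_below br10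
            (fun p j hp => hlam p j hp) (fun p j hp => hxi p j hp) n).symm

end
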